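/- Consider the globalized ASPIN iteration described in the context. Assume: J : ℝ^n → ℝ is continuously differentiable; the level set L = {u ∈ ℝ^n : J(u) ≤ J(u₀)} is compact; ‖∇J(u)‖ ≤ C_g for all u ∈ L for some C_g > 0; and ‖B_i‖ ≤ C_B for all i for some C_B > 0. Then the sequence of iterates converges to first-order criticality: lim_{i→∞} ‖∇J(u_i)‖ = 0. -/

import Mathlib

open RealInnerProductSpace Filter

/-- The data of the globalized ASPIN iteration (Algorithm 2): parameters, iterates,
Hessian approximations, preconditioned gradients, corrections and the two
trust-region radii, together with the basic parameter constraints. -/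
structure GAspin (n : ℕ) where
  /-- the objective function -/
  J : EuclideanSpace ℝ (Fin n) → ℝ
  γ₁ : ℝ
  γ₂ : ℝ
  η : ℝ
  β₁ : ℝ
  β₂ : ℝ
  hγ₁ : 0 < γ₁
  hγ₁' : γ₁ < 1
  hγ₂ : 1 < γ₂
  hη : 0 < η
  hη' : η < 1
  hβ : β₂ < β₁
  hβ₂ : 0 < β₂
  /-- the iterates -/
  u : ℕ → EuclideanSpace ℝ (Fin n)
  /-- the symmetric Hessian approximations -/
  B : ℕ → EuclideanSpace ℝ (Fin n) →L[ℝ] EuclideanSpace ℝ (Fin n)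
  /-- the preconditioned gradients -/
  gt : ℕ → EuclideanSpace ℝ (Fin n)
  /-- the corrections -/
  s : ℕ → EuclideanSpace ℝ (Fin n)
  /-- the global trust-region radii -/
  ΔG : ℕ → ℝ
  /-- the local trust-region radii -/
  ΔL : ℕ → ℝ
  hΔG : ∀ i, 0 < ΔG i
  hΔL : ∀ i, 0 < ΔL i
  hΔL0 : ΔL 0 ≤ ΔG 0
  hBsymm : ∀ i, ∀ x y, ⟪B i x, y⟫ = ⟪x, B i y⟫

namespace GAspin

variable {n : ℕ} (A : GAspin n)

/-- The gradient `g_i = ∇J(u_i)` of the objective at the `i`-th iterate. -/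
noncomputable def g (i : ℕ) : EuclideanSpace ℝ (Fin n) := gradient A.J (A.u i)

/-- The preconditioned quadratic model `ψ̃_i(s) = ⟨g̃_i, s⟩ + ½⟨s, B_i s⟩`. -/
noncomputable def psi (i : ℕ) (v : EuclideanSpace ℝ (Fin n)) : ℝ :=
  ⟪A.gt i, v⟫ + (1 / 2) * ⟪v, A.B i v⟫

/-- The decrease ratio `ρ̃_i = (J(u_i) − J(u_i + s_i))/(−ψ̃_i(s_i))`. -/
noncomputable def rho (i : ℕ) : ℝ :=
  (A.J (A.u i) - A.J (A.u i + A.s i)) / (-(A.psi i (A.s i)))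

/-- The extended sufficient decrease predicate `D_i`. -/
def D (i : ℕ) : Prop :=
  A.β₁ * min (‖A.gt i‖ ^ 2) (‖A.gt i‖ * A.ΔG i) ≥
    A.β₂ * min (‖A.g i‖ ^ 2) (‖A.g i‖ * A.ΔG i)

/-- Iteration `i` is successful if `ρ̃_i ≥ η` and `D_i` holds. -/
def Succ (i : ℕ) : Prop := A.rho i ≥ A.η ∧ A.D i

end GAspin

private lemma gaspin_telescope {E : Type*} [NormedAddCommGroup E] (v : ℕ → E) (f : ℕ → ℝ)
    (c : ℝ) (m : ℕ) :
    ∀ l, m ≤ l → (∀ i, m ≤ i → i < l → ‖v (i + 1) - v i‖ ≤ c * (f i - f (i + 1))) →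
      ‖v l - v m‖ ≤ c * (f m - f l) := by
  intro l
  induction l with
  | zero =>
    intro h _
    have : m = 0 := Nat.le_zero.mp h
    simp [this]
  | succ l ih =>
    intro hml hstep
    rcases eq_or_lt_of_le hml with h | h
    · simp [← h]
    · have hml' : m ≤ l := Nat.lt_succ_iff.mp h
      have h1 := ih hml' (fun i hi hil => hstep i hi (Nat.lt_succ_of_lt hil))
      have h2 := hstep l hml' (Nat.lt_succ_self l)
      have htri := dist_triangle (v (l + 1)) (v l) (v m)
      simp only [dist_eq_norm] at htri
      have heq : c * (f l - f (l + 1)) + c * (f m - f l) = c * (f m - f (l + 1)) := by ring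
      linarith

set_option maxHeartbeats 2000000 in
/-- Theorem 6.2 of the paper: under the standard trust-region assumptions, the
globalized ASPIN iteration converges to first-order criticality,
`lim_{i→∞} ‖∇J(u_i)‖ = 0`. -/
theorem gaspin_gradient_tendsto_zero {n : ℕ} (A : GAspin n)
    (hJ : ContDiff ℝ 1 A.J)
    (hcompact : IsCompact {v : EuclideanSpace ℝ (Fin n) | A.J v ≤ A.J (A.u 0)})
    (C_g : ℝ) (hCg : 0 < C_g)
    (hgb : ∀ v, A.J v ≤ A.J (A.u 0) → ‖gradient A.J v‖ ≤ C_g)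
    (C_B : ℝ) (hCB : 0 < C_B) (hBb : ∀ i, ‖A.B i‖ ≤ C_B)
    (ha : ∀ i, ‖A.gt i - A.g i‖ ≤ A.ΔL i)
    (hb1 : ∀ i, ‖A.s i‖ ≤ A.ΔG i)
    (hb2 : ∀ i, -(A.psi i (A.s i)) ≥ A.β₁ * min (‖A.gt i‖ ^ 2) (‖A.gt i‖ * A.ΔG i))
    (hc1 : ∀ i, A.Succ i → A.u (i + 1) = A.u i + A.s i)
    (hc2 : ∀ i, ¬A.Succ i → A.u (i + 1) = A.u i)
    (hd1 : ∀ i, A.Succ i → A.ΔG (i + 1) = A.γ₂ * A.ΔG i)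
    (hd2 : ∀ i, A.rho i ≥ A.η → ¬A.D i → A.ΔG (i + 1) = A.ΔG i)
    (hd3 : ∀ i, ¬(A.rho i ≥ A.η) → A.ΔG (i + 1) = A.γ₁ * A.ΔG i)
    (he1 : ∀ i, A.D i → A.ΔL (i + 1) = min (A.ΔG i) (A.γ₂ * A.ΔL i))
    (he2 : ∀ i, ¬A.D i → A.ΔL (i + 1) = min (A.ΔG i) (A.γ₁ * A.ΔL i)) :
    Filter.Tendsto (fun i => ‖A.g i‖) Filter.atTop (nhds 0) := by
  classical
  have hβ₁ : (0:ℝ) < A.β₁ := A.hβ₂.trans A.hβ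
  have hγ₂pos : (0:ℝ) < A.γ₂ := lt_trans one_pos A.hγ₂
  have hmin_g_nonneg : ∀ i, 0 ≤ min (‖A.g i‖ ^ 2) (‖A.g i‖ * A.ΔG i) := fun i =>
    le_min (by positivity) (mul_nonneg (norm_nonneg _) (A.hΔG i).le)
  have hmin_gt_nonneg : ∀ i, 0 ≤ min (‖A.gt i‖ ^ 2) (‖A.gt i‖ * A.ΔG i) := fun i =>
    le_min (by positivity) (mul_nonneg (norm_nonneg _) (A.hΔG i).le)
  have hp_nonneg : ∀ i, 0 ≤ -(A.psi i (A.s i)) := fun i =>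
    le_trans (mul_nonneg hβ₁.le (hmin_gt_nonneg i)) (hb2 i)
  -- decrease on successful iterations
  have hsucc_dec : ∀ i, A.Succ i →
      A.η * (A.β₂ * min (‖A.g i‖ ^ 2) (‖A.g i‖ * A.ΔG i)) ≤ A.J (A.u i) - A.J (A.u (i + 1)) := by
    intro i hi
    obtain ⟨hρ, hD⟩ := hi
    have hDle : A.β₂ * min (‖A.g i‖ ^ 2) (‖A.g i‖ * A.ΔG i) ≤ -(A.psi i (A.s i)) :=
      le_trans hD (hb2 i)
    have hppos : 0 < -(A.psi i (A.s i)) := by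
      rcases (hp_nonneg i).lt_or_eq with h | h
      · exact h
      · exfalso
        have hz : A.rho i = 0 := by
          unfold GAspin.rho
          rw [← h, div_zero]
        rw [ge_iff_le, hz] at hρ
        exact absurd hρ (not_le.mpr A.hη)
    have hρ' : A.η ≤ (A.J (A.u i) - A.J (A.u i + A.s i)) / (-(A.psi i (A.s i))) := hρ
    have hnum : A.η * -(A.psi i (A.s i)) ≤ A.J (A.u i) - A.J (A.u i + A.s i) :=
      (le_div_iff₀ hppos).mp hρ'
    rw [hc1 i ⟨hρ, hD⟩]
    calc A.η * (A.β₂ * min (‖A.g i‖ ^ 2) (‖A.g i‖ * A.ΔG i))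
        ≤ A.η * -(A.psi i (A.s i)) := mul_le_mul_of_nonneg_left hDle A.hη.le
      _ ≤ _ := hnum
  have hJdec : ∀ i, A.J (A.u (i + 1)) ≤ A.J (A.u i) := by
    intro i
    by_cases h : A.Succ i
    · have h1 := hsucc_dec i h
      have h2 : 0 ≤ A.η * (A.β₂ * min (‖A.g i‖ ^ 2) (‖A.g i‖ * A.ΔG i)) :=
        mul_nonneg A.hη.le (mul_nonneg A.hβ₂.le (hmin_g_nonneg i))
      linarith
    · rw [hc2 i h]
  have hJanti : ∀ a b, a ≤ b → A.J (A.u b) ≤ A.J (A.u a) := by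
    intro a b hab
    induction b, hab using Nat.le_induction with
    | base => exact le_rfl
    | succ b hab ih => exact (hJdec b).trans ih
  have hL : ∀ i, A.J (A.u i) ≤ A.J (A.u 0) := fun i => hJanti 0 i (Nat.zero_le i)
  -- lower bound and convergence of J(u i)
  obtain ⟨z, hzL, hzmin⟩ := hcompact.exists_isMinOn ⟨A.u 0, show A.J (A.u 0) ≤ A.J (A.u 0) from le_rfl⟩
    (hJ.continuous.continuousOn)
  have hlb : ∀ i, A.J z ≤ A.J (A.u i) := fun i => isMinOn_iff.mp hzmin _ (hL i)
  have hbdd : BddBelow (Set.range fun i => A.J (A.u i)) :=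
    ⟨A.J z, by rintro x ⟨i, rfl⟩; exact hlb i⟩
  set Jstar := ⨅ i, A.J (A.u i) with hJstar
  have hJto : Tendsto (fun i => A.J (A.u i)) atTop (nhds Jstar) :=
    tendsto_atTop_ciInf (fun a b hab => hJanti a b hab) hbdd
  have hJstar_le : ∀ i, Jstar ≤ A.J (A.u i) := fun i => ciInf_le hbdd i
  have hΔL_le : ∀ j, A.ΔL (j + 1) ≤ A.ΔG j := by
    intro j
    by_cases h : A.D j
    · rw [he1 j h]; exact min_le_left _ _
    · rw [he2 j h]; exact min_le_left _ _
  -- gradient continuity, uniform continuity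
  set L : Set (EuclideanSpace ℝ (Fin n)) := {v | A.J v ≤ A.J (A.u 0)} with hLdef
  set K := Metric.cthickening 1 L with hKdef
  have hgradcont : Continuous (gradient A.J) := by
    have h1 : Continuous (fderiv ℝ A.J) := hJ.continuous_fderiv one_ne_zero
    exact (InnerProductSpace.toDual ℝ (EuclideanSpace ℝ (Fin n))).symm.continuous.comp h1
  have hKcomp : IsCompact K := hcompact.cthickening
  have hUC := Metric.uniformContinuousOn_iff_le.mp
    (hKcomp.uniformContinuousOn_of_continuous hgradcont.continuousOn)
  have hUCL := Metric.uniformContinuousOn_iff_le.mp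
    (hcompact.uniformContinuousOn_of_continuous hgradcont.continuousOn)
  have hdiff : ∀ x, DifferentiableAt ℝ A.J x := fun x => (hJ.differentiable one_ne_zero) x
  have hfd : ∀ x, fderiv ℝ A.J x =
      InnerProductSpace.toDual ℝ (EuclideanSpace ℝ (Fin n)) (gradient A.J x) := by
    intro x
    rw [gradient, LinearIsometryEquiv.apply_symm_apply]
  have hfd_apply : ∀ x v, fderiv ℝ A.J x v = ⟪gradient A.J x, v⟫ := by
    intro x v
    rw [hfd]
    simp [InnerProductSpace.toDual_apply_apply]
  -- Taylor-type estimate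
  have htaylor : ∀ δ : ℝ, 0 < δ → ∃ r, 0 < r ∧ ∀ i, A.ΔG i ≤ min r 1 →
      |A.J (A.u i + A.s i) - A.J (A.u i) - ⟪A.g i, A.s i⟫| ≤ δ * ‖A.s i‖ := by
    intro δ hδ
    obtain ⟨r, hr, hUCr⟩ := hUC δ hδ
    refine ⟨r, hr, fun i hi => ?_⟩
    have huL : A.u i ∈ L := hL i
    have hgi : A.g i = gradient A.J (A.u i) := rfl
    have hseg : ∀ x ∈ segment ℝ (A.u i) (A.u i + A.s i), ‖x - A.u i‖ ≤ ‖A.s i‖ := by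
      intro x hx
      rw [segment_eq_image'] at hx
      obtain ⟨θ, hθ, rfl⟩ := hx
      rw [add_sub_cancel_left, add_sub_cancel_left, norm_smul, Real.norm_eq_abs,
        abs_of_nonneg hθ.1]
      exact mul_le_of_le_one_left (norm_nonneg _) hθ.2
    have hsK : ∀ x ∈ segment ℝ (A.u i) (A.u i + A.s i), x ∈ K := by
      intro x hx
      apply Metric.mem_cthickening_of_dist_le x (A.u i) 1 L huL
      rw [dist_eq_norm]
      exact (hseg x hx).trans ((hb1 i).trans (hi.trans (min_le_right r 1)))
    have hbound : ∀ x ∈ segment ℝ (A.u i) (A.u i + A.s i),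
        ‖fderiv ℝ A.J x - fderiv ℝ A.J (A.u i)‖ ≤ δ := by
      intro x hx
      have h1 : dist (gradient A.J x) (gradient A.J (A.u i)) ≤ δ := by
        apply hUCr x (hsK x hx) (A.u i) (hsK (A.u i) (left_mem_segment ℝ _ _))
        rw [dist_eq_norm]
        exact (hseg x hx).trans ((hb1 i).trans (hi.trans (min_le_left r 1)))
      rw [dist_eq_norm] at h1
      rw [hfd, hfd, ← map_sub]
      calc ‖(InnerProductSpace.toDual ℝ (EuclideanSpace ℝ (Fin n)))
            (gradient A.J x - gradient A.J (A.u i))‖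
          = ‖gradient A.J x - gradient A.J (A.u i)‖ := LinearIsometryEquiv.norm_map _ _
        _ ≤ δ := h1
    have hmain := (convex_segment (A.u i) (A.u i + A.s i)).norm_image_sub_le_of_norm_hasFDerivWithin_le'
      (fun x _ => (hdiff x).hasFDerivAt.hasFDerivWithinAt) hbound
      (left_mem_segment ℝ (A.u i) (A.u i + A.s i)) (right_mem_segment ℝ (A.u i) (A.u i + A.s i))
    rw [add_sub_cancel_left] at hmain
    rw [hgi, ← hfd_apply (A.u i) (A.s i), ← Real.norm_eq_abs]
    exact hmain
  -- the key lemma: gradients get arbitrarily small beyond any index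
  have key : ∀ ε : ℝ, 0 < ε → ∀ N0 : ℕ, ∃ i, N0 ≤ i ∧ ‖A.g i‖ < ε := by
    intro ε hε N0
    by_contra hk
    push_neg at hk
    -- Part I : ΔG tends to 0 (in the ∀δ ∃M form)
    have hsmall : ∀ δ : ℝ, 0 < δ → ∃ M, ∀ i, M ≤ i → A.ΔG i ≤ δ := by
      by_cases hsB : ∀ M, ∃ i, M ≤ i ∧ A.Succ i
      · -- infinitely many successful iterations
        intro δ hδ
        have hρ'pos : 0 < δ / A.γ₂ := div_pos hδ hγ₂pos
        have hminpos : 0 < min (ε ^ 2) (ε * (δ / A.γ₂)) :=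
          lt_min (pow_pos hε 2) (mul_pos hε hρ'pos)
        have hcpos : 0 < A.η * A.β₂ * min (ε ^ 2) (ε * (δ / A.γ₂)) := mul_pos (mul_pos A.hη A.hβ₂) hminpos
        obtain ⟨M₁, hM₁⟩ : ∃ M₁, ∀ i, M₁ ≤ i →
            A.J (A.u i) - Jstar < A.η * A.β₂ * min (ε ^ 2) (ε * (δ / A.γ₂)) := by
          have h0 := hJto.eventually_lt_const (lt_add_of_pos_right Jstar hcpos)
          rw [eventually_atTop] at h0
          obtain ⟨M₁, hM₁⟩ := h0
          exact ⟨M₁, fun i hi => by linarith [hM₁ i hi]⟩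
        have hsucc_ΔG : ∀ i, max M₁ N0 ≤ i → A.Succ i → A.ΔG i < δ / A.γ₂ := by
          intro i hi hS
          have h1 := hsucc_dec i hS
          rw [← mul_assoc] at h1
          have h2 : A.J (A.u i) - A.J (A.u (i + 1)) ≤ A.J (A.u i) - Jstar := by
            linarith [hJstar_le (i + 1)]
          have h3 := hM₁ i (le_trans (le_max_left _ _) hi)
          have hge : ε ≤ ‖A.g i‖ := hk i (le_trans (le_max_right _ _) hi)
          have hminmono : min (ε ^ 2) (ε * A.ΔG i) ≤ min (‖A.g i‖ ^ 2) (‖A.g i‖ * A.ΔG i) :=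
            le_min (le_trans (min_le_left _ _) (by nlinarith))
              (le_trans (min_le_right _ _) (by nlinarith [A.hΔG i]))
          have e1 : A.η * A.β₂ * min (ε ^ 2) (ε * A.ΔG i) ≤
              A.η * A.β₂ * min (‖A.g i‖ ^ 2) (‖A.g i‖ * A.ΔG i) :=
            mul_le_mul_of_nonneg_left hminmono (mul_pos A.hη A.hβ₂).le
          have hstep : A.η * A.β₂ * min (ε ^ 2) (ε * A.ΔG i) <
              A.η * A.β₂ * min (ε ^ 2) (ε * (δ / A.γ₂)) := by linarith
          have hmlt : min (ε ^ 2) (ε * A.ΔG i) < min (ε ^ 2) (ε * (δ / A.γ₂)) :=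
            lt_of_mul_lt_mul_left hstep (mul_pos A.hη A.hβ₂).le
          by_contra hcon
          push_neg at hcon
          have : min (ε ^ 2) (ε * (δ / A.γ₂)) ≤ min (ε ^ 2) (ε * A.ΔG i) :=
            min_le_min le_rfl (mul_le_mul_of_nonneg_left hcon hε.le)
          linarith
        obtain ⟨i₀, hi₀, hi₀S⟩ := hsB (max M₁ N0)
        have hΔi₀ : A.ΔG i₀ < δ / A.γ₂ := hsucc_ΔG i₀ hi₀ hi₀S
        have hγδ : A.γ₂ * (δ / A.γ₂) = δ := by field_simp
        have hbound : ∀ k, A.ΔG (i₀ + 1 + k) ≤ δ := by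
          intro k
          induction k with
          | zero =>
            rw [Nat.add_zero, hd1 i₀ hi₀S]
            calc A.γ₂ * A.ΔG i₀ ≤ A.γ₂ * (δ / A.γ₂) :=
                mul_le_mul_of_nonneg_left hΔi₀.le hγ₂pos.le
              _ = δ := hγδ
          | succ k ih =>
            have hik : max M₁ N0 ≤ i₀ + 1 + k := le_trans hi₀ (by omega)
            rw [show i₀ + 1 + (k + 1) = (i₀ + 1 + k) + 1 by omega]
            by_cases hS : A.Succ (i₀ + 1 + k)
            · have hlt := hsucc_ΔG _ hik hS
              rw [hd1 _ hS]
              calc A.γ₂ * A.ΔG (i₀ + 1 + k) ≤ A.γ₂ * (δ / A.γ₂) :=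
                  mul_le_mul_of_nonneg_left hlt.le hγ₂pos.le
                _ = δ := hγδ
            · by_cases hρη : A.rho (i₀ + 1 + k) ≥ A.η
              · have hnD : ¬ A.D (i₀ + 1 + k) := fun hD => hS ⟨hρη, hD⟩
                rw [hd2 _ hρη hnD]; exact ih
              · rw [hd3 _ hρη]
                nlinarith [A.hΔG (i₀ + 1 + k), A.hγ₁, A.hγ₁']
        refine ⟨i₀ + 1, fun i hi => ?_⟩
        have h9 : A.ΔG (i₀ + 1 + (i - (i₀ + 1))) ≤ δ := hbound (i - (i₀ + 1))
        rwa [show i₀ + 1 + (i - (i₀ + 1)) = i by omega] at h9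
      · -- finitely many successful iterations
        push_neg at hsB
        obtain ⟨M0, hM0⟩ := hsB
        have hMns : ∀ i, max M0 N0 ≤ i → ¬ A.Succ i := fun i hi =>
          hM0 i (le_trans (le_max_left _ _) hi)
        have hMg : ∀ i, max M0 N0 ≤ i → ε ≤ ‖A.g i‖ := fun i hi =>
          hk i (le_trans (le_max_right _ _) hi)
        have hanti : ∀ i, max M0 N0 ≤ i → A.ΔG (i + 1) ≤ A.ΔG i := by
          intro i hi
          by_cases hρη : A.rho i ≥ A.η
          · have hnD : ¬ A.D i := fun hD => hMns i hi ⟨hρη, hD⟩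
            rw [hd2 i hρη hnD]
          · rw [hd3 i hρη]
            nlinarith [A.hΔG i, A.hγ₁, A.hγ₁']
        have hmono : ∀ a b, max M0 N0 ≤ a → a ≤ b → A.ΔG b ≤ A.ΔG a := by
          intro a b ha hab
          induction b, hab using Nat.le_induction with
          | base => exact le_rfl
          | succ b hab ih => exact le_trans (hanti b (le_trans ha hab)) ih
        have hueq : ∀ i, max M0 N0 ≤ i → A.u i = A.u (max M0 N0) := by
          intro i hi
          induction i, hi using Nat.le_induction with
          | base => rfl
          | succ i hi ih => rw [hc2 i (hMns i hi), ih]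
        have hfreqρ : ∀ N', max M0 N0 ≤ N' → ∃ j, N' ≤ j ∧ ¬ (A.rho j ≥ A.η) := by
          by_contra hcon
          push_neg at hcon
          obtain ⟨N', hN'M, hN'⟩ := hcon
          have hnD : ∀ j, N' ≤ j → ¬ A.D j := fun j hj hD =>
            hMns j (le_trans hN'M hj) ⟨hN' j hj, hD⟩
          have hΔconst : ∀ j, N' ≤ j → A.ΔG j = A.ΔG N' := by
            intro j hj
            induction j, hj using Nat.le_induction with
            | base => rfl
            | succ j hj ih => rw [hd2 j (hN' j hj) (hnD j hj), ih]
          have hΔLgeo : ∀ k, A.ΔL (N' + k) ≤ A.γ₁ ^ k * A.ΔL N' := by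
            intro k
            induction k with
            | zero => simp
            | succ k ih =>
              have h1 : A.ΔL (N' + k + 1) ≤ A.γ₁ * A.ΔL (N' + k) := by
                rw [he2 (N' + k) (hnD _ (Nat.le_add_right _ _))]
                exact min_le_right _ _
              rw [show N' + (k + 1) = N' + k + 1 by omega]
              calc A.ΔL (N' + k + 1) ≤ A.γ₁ * A.ΔL (N' + k) := h1
                _ ≤ A.γ₁ * (A.γ₁ ^ k * A.ΔL N') := mul_le_mul_of_nonneg_left ih A.hγ₁.le
                _ = A.γ₁ ^ (k + 1) * A.ΔL N' := by ring
          have hΔLto : Tendsto (fun k => A.ΔL (N' + k)) atTop (nhds 0) := by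
            apply squeeze_zero (fun k => (A.hΔL _).le) hΔLgeo
            have h0 := (tendsto_pow_atTop_nhds_zero_of_lt_one A.hγ₁.le A.hγ₁').mul_const (A.ΔL N')
            simpa using h0
          have hgeq : ∀ k, A.g (N' + k) = A.g N' := by
            intro k
            show gradient A.J (A.u (N' + k)) = gradient A.J (A.u N')
            rw [hueq (N' + k) (le_trans hN'M (Nat.le_add_right _ _)), hueq N' hN'M]
          have hgtto : Tendsto (fun k => A.gt (N' + k)) atTop (nhds (A.g N')) := by
            rw [tendsto_iff_norm_sub_tendsto_zero]
            apply squeeze_zero (fun k => norm_nonneg _) (fun k => ?_) hΔLto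
            rw [← hgeq k]
            exact ha (N' + k)
          have hFto : Tendsto (fun k => A.β₁ * min (‖A.gt (N' + k)‖ ^ 2)
              (‖A.gt (N' + k)‖ * A.ΔG N')) atTop
              (nhds (A.β₁ * min (‖A.g N'‖ ^ 2) (‖A.g N'‖ * A.ΔG N'))) :=
            Tendsto.const_mul _ (Tendsto.min ((hgtto.norm).pow 2) ((hgtto.norm).mul_const _))
          have hFlt : ∀ k, A.β₁ * min (‖A.gt (N' + k)‖ ^ 2) (‖A.gt (N' + k)‖ * A.ΔG N') ≤
              A.β₂ * min (‖A.g N'‖ ^ 2) (‖A.g N'‖ * A.ΔG N') := by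
            intro k
            have hj : N' ≤ N' + k := Nat.le_add_right _ _
            have hD0 := hnD _ hj
            unfold GAspin.D at hD0
            push_neg at hD0
            rw [hgeq k, hΔconst _ hj] at hD0
            exact hD0.le
          have hle := le_of_tendsto hFto (Filter.Eventually.of_forall hFlt)
          have hminpos : 0 < min (‖A.g N'‖ ^ 2) (‖A.g N'‖ * A.ΔG N') := by
            have h1 : ε ≤ ‖A.g N'‖ := hMg N' hN'M
            exact lt_min (by nlinarith) (mul_pos (lt_of_lt_of_le hε h1) (A.hΔG N'))
          nlinarith [A.hβ]
        intro δ hδ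
        have hgeo : ∀ k : ℕ, ∃ i, max M0 N0 ≤ i ∧ A.ΔG i ≤ A.γ₁ ^ k * A.ΔG (max M0 N0) := by
          intro k
          induction k with
          | zero => exact ⟨max M0 N0, le_rfl, by simp⟩
          | succ k ih =>
            obtain ⟨i, hMi, hik⟩ := ih
            obtain ⟨j, hij, hjρ⟩ := hfreqρ i hMi
            refine ⟨j + 1, by omega, ?_⟩
            rw [hd3 j hjρ]
            calc A.γ₁ * A.ΔG j ≤ A.γ₁ * A.ΔG i :=
                mul_le_mul_of_nonneg_left (hmono i j hMi hij) A.hγ₁.le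
              _ ≤ A.γ₁ * (A.γ₁ ^ k * A.ΔG (max M0 N0)) := mul_le_mul_of_nonneg_left hik A.hγ₁.le
              _ = A.γ₁ ^ (k + 1) * A.ΔG (max M0 N0) := by ring
        have h0 : Tendsto (fun k => A.γ₁ ^ k * A.ΔG (max M0 N0)) atTop (nhds 0) := by
          simpa using (tendsto_pow_atTop_nhds_zero_of_lt_one A.hγ₁.le A.hγ₁').mul_const
            (A.ΔG (max M0 N0))
        obtain ⟨k, hkδ⟩ := (h0.eventually_lt_const hδ).exists
        obtain ⟨i, hMi, hik⟩ := hgeo k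
        exact ⟨i, fun j hj => le_trans (hmono i j hMi hj) (le_trans hik hkδ.le)⟩
    -- Part II : beyond some index every iteration is successful
    have hΔLsmall : ∀ δ : ℝ, 0 < δ → ∃ M, ∀ i, M ≤ i → A.ΔL i ≤ δ := by
      intro δ hδ
      obtain ⟨M, hM⟩ := hsmall δ hδ
      refine ⟨M + 1, fun i hi => ?_⟩
      obtain ⟨j, rfl⟩ : ∃ j, i = j + 1 := ⟨i - 1, by omega⟩
      exact le_trans (hΔL_le j) (hM j (by omega))
    have hcpos : 0 < (1 - A.η) * A.β₁ * (ε / 2) :=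
      mul_pos (mul_pos (by linarith [A.hη']) hβ₁) (by linarith)
    set c := (1 - A.η) * A.β₁ * (ε / 2) with hc
    have hc3 : 0 < c / 3 := div_pos hcpos (by norm_num)
    obtain ⟨r, hr, htay⟩ := htaylor (c / 3) hc3
    obtain ⟨M₁, hM₁⟩ := hsmall (min (min r 1) (min (2 * (c / 3) / C_B) (ε / 2)))
      (lt_min (lt_min hr one_pos) (lt_min (div_pos (by linarith) hCB) (by linarith)))
    obtain ⟨M₂, hM₂⟩ := hΔLsmall (min (c / 3) (min (ε / 2) ((A.β₁ - A.β₂) * ε / A.β₁)))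
      (lt_min hc3 (lt_min (by linarith) (by
        apply div_pos _ hβ₁
        have := A.hβ
        nlinarith)))
    have hAllSucc : ∀ i, max (max M₁ M₂) N0 ≤ i → A.Succ i := by
      intro i hi
      have h1 : M₁ ≤ i := le_trans (le_trans (le_max_left _ _) (le_max_left _ _)) hi
      have h2 : M₂ ≤ i := le_trans (le_trans (le_max_right _ _) (le_max_left _ _)) hi
      have h3 : N0 ≤ i := le_trans (le_max_right _ _) hi
      have hΔ := hM₁ i h1
      have hΔL' := hM₂ i h2
      have hgε : ε ≤ ‖A.g i‖ := hk i h3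
      have hΔr : A.ΔG i ≤ min r 1 := le_trans hΔ (min_le_left _ _)
      have hΔCB : A.ΔG i ≤ 2 * (c / 3) / C_B :=
        le_trans hΔ (le_trans (min_le_right _ _) (min_le_left _ _))
      have hΔε : A.ΔG i ≤ ε / 2 :=
        le_trans hΔ (le_trans (min_le_right _ _) (min_le_right _ _))
      have hΔLc : A.ΔL i ≤ c / 3 := le_trans hΔL' (min_le_left _ _)
      have hΔLε : A.ΔL i ≤ ε / 2 :=
        le_trans hΔL' (le_trans (min_le_right _ _) (min_le_left _ _))
      have hΔLβ : A.ΔL i ≤ (A.β₁ - A.β₂) * ε / A.β₁ :=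
        le_trans hΔL' (le_trans (min_le_right _ _) (min_le_right _ _))
      have hgtlb : ‖A.g i‖ - A.ΔL i ≤ ‖A.gt i‖ := by
        have h4 := norm_sub_norm_le (A.g i) (A.gt i)
        have h5 : ‖A.g i - A.gt i‖ = ‖A.gt i - A.g i‖ := norm_sub_rev _ _
        have h6 := ha i
        linarith
      have hgt2 : ε / 2 ≤ ‖A.gt i‖ := by linarith
      have hmin_gt : min (‖A.gt i‖ ^ 2) (‖A.gt i‖ * A.ΔG i) = ‖A.gt i‖ * A.ΔG i := by
        apply min_eq_right
        have h7 : A.ΔG i ≤ ‖A.gt i‖ := le_trans hΔε hgt2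
        nlinarith [A.hΔG i, norm_nonneg (A.gt i)]
      have hmin_g : min (‖A.g i‖ ^ 2) (‖A.g i‖ * A.ΔG i) = ‖A.g i‖ * A.ΔG i := by
        apply min_eq_right
        have h7 : A.ΔG i ≤ ‖A.g i‖ := le_trans hΔε (by linarith)
        nlinarith [A.hΔG i, norm_nonneg (A.g i)]
      have hβ₁ΔL : A.β₁ * A.ΔL i ≤ (A.β₁ - A.β₂) * ε := by
        calc A.β₁ * A.ΔL i ≤ A.β₁ * ((A.β₁ - A.β₂) * ε / A.β₁) :=
            mul_le_mul_of_nonneg_left hΔLβ hβ₁.le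
          _ = (A.β₁ - A.β₂) * ε := by field_simp
      have hβd : 0 ≤ A.β₁ - A.β₂ := by linarith [A.hβ]
      have hkey : A.β₂ * ‖A.g i‖ ≤ A.β₁ * ‖A.gt i‖ := by
        nlinarith [mul_le_mul_of_nonneg_left hgε hβd, mul_le_mul_of_nonneg_left hgtlb hβ₁.le]
      have hD : A.D i := by
        unfold GAspin.D
        rw [hmin_gt, hmin_g, ge_iff_le]
        nlinarith [mul_le_mul_of_nonneg_right hkey (A.hΔG i).le]
      have hppos : A.β₁ * (ε / 2) * A.ΔG i ≤ -(A.psi i (A.s i)) := by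
        have h8 := hb2 i
        rw [hmin_gt] at h8
        nlinarith [mul_le_mul_of_nonneg_right hgt2 (A.hΔG i).le, hβ₁]
      have hp0 : 0 < -(A.psi i (A.s i)) :=
        lt_of_lt_of_le (mul_pos (mul_pos hβ₁ (by linarith : (0:ℝ) < ε / 2)) (A.hΔG i)) hppos
      have hEt := htay i hΔr
      have hE2 : |⟪A.gt i - A.g i, A.s i⟫| ≤ A.ΔL i * ‖A.s i‖ :=
        le_trans (abs_real_inner_le_norm _ _)
          (mul_le_mul_of_nonneg_right (ha i) (norm_nonneg _))
      have hE3 : |⟪A.s i, A.B i (A.s i)⟫| ≤ C_B * (‖A.s i‖ * ‖A.s i‖) := by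
        calc |⟪A.s i, A.B i (A.s i)⟫| ≤ ‖A.s i‖ * ‖A.B i (A.s i)‖ := abs_real_inner_le_norm _ _
          _ ≤ ‖A.s i‖ * (C_B * ‖A.s i‖) := by
              apply mul_le_mul_of_nonneg_left _ (norm_nonneg _)
              exact le_trans ((A.B i).le_opNorm _)
                (mul_le_mul_of_nonneg_right (hBb i) (norm_nonneg _))
          _ = C_B * (‖A.s i‖ * ‖A.s i‖) := by ring
      have hpsieq : A.psi i (A.s i) =
          ⟪A.g i, A.s i⟫ + ⟪A.gt i - A.g i, A.s i⟫ + 1 / 2 * ⟪A.s i, A.B i (A.s i)⟫ := by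
        unfold GAspin.psi
        rw [inner_sub_left]
        ring
      have hsΔ : ‖A.s i‖ ≤ A.ΔG i := hb1 i
      have hCBΔ : C_B * A.ΔG i ≤ 2 * (c / 3) := by
        have h9 : C_B * A.ΔG i ≤ C_B * (2 * (c / 3) / C_B) :=
          mul_le_mul_of_nonneg_left hΔCB hCB.le
        have h10 : C_B * (2 * (c / 3) / C_B) = 2 * (c / 3) := by
          field_simp
        linarith
      have hEbound : |A.J (A.u i + A.s i) - A.J (A.u i) - A.psi i (A.s i)| ≤ c * A.ΔG i := by
        rw [hpsieq]
        have a1 := abs_le.mp hEt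
        have a2 := abs_le.mp hE2
        have a3 := abs_le.mp hE3
        have b1 : c / 3 * ‖A.s i‖ ≤ c / 3 * A.ΔG i :=
          mul_le_mul_of_nonneg_left hsΔ hc3.le
        have b2 : A.ΔL i * ‖A.s i‖ ≤ c / 3 * A.ΔG i :=
          mul_le_mul hΔLc hsΔ (norm_nonneg _) hc3.le
        have b3 : C_B * (‖A.s i‖ * ‖A.s i‖) ≤ C_B * (A.ΔG i * A.ΔG i) := by
          apply mul_le_mul_of_nonneg_left _ hCB.le
          exact mul_le_mul hsΔ hsΔ (norm_nonneg _) (A.hΔG i).le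
        have b4 : C_B * (A.ΔG i * A.ΔG i) ≤ 2 * (c / 3) * A.ΔG i := by
          nlinarith [mul_le_mul_of_nonneg_right hCBΔ (A.hΔG i).le]
        rw [abs_le]
        constructor <;> nlinarith
      have hρ : A.rho i ≥ A.η := by
        have hEb := abs_le.mp hEbound
        have h6 : c * A.ΔG i ≤ (1 - A.η) * -(A.psi i (A.s i)) := by
          calc c * A.ΔG i = (1 - A.η) * (A.β₁ * (ε / 2) * A.ΔG i) := by rw [hc]; ring
            _ ≤ (1 - A.η) * -(A.psi i (A.s i)) :=
              mul_le_mul_of_nonneg_left hppos (by linarith [A.hη'])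
        have hnum : A.η * -(A.psi i (A.s i)) ≤ A.J (A.u i) - A.J (A.u i + A.s i) := by
          nlinarith [hEb.1, hEb.2]
        show A.η ≤ A.rho i
        unfold GAspin.rho
        rw [le_div_iff₀ hp0]
        exact hnum
      exact ⟨hρ, hD⟩
    -- Part III : contradiction, ΔG must blow up
    have hgrow : ∀ k, A.ΔG (max (max M₁ M₂) N0) ≤ A.ΔG (max (max M₁ M₂) N0 + k) := by
      intro k
      induction k with
      | zero => exact le_rfl
      | succ k ih =>
        rw [show max (max M₁ M₂) N0 + (k + 1) = (max (max M₁ M₂) N0 + k) + 1 by omega,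
          hd1 _ (hAllSucc _ (Nat.le_add_right _ _))]
        nlinarith [A.hΔG (max (max M₁ M₂) N0 + k), A.hγ₂]
    obtain ⟨M₃, hM₃⟩ := hsmall (A.ΔG (max (max M₁ M₂) N0) / 2)
      (half_pos (A.hΔG _))
    have h7 := hM₃ (max (max M₁ M₂) N0 + M₃) (by omega)
    have h8 := hgrow M₃
    have h9 := A.hΔG (max (max M₁ M₂) N0)
    linarith
  -- Step 3 : from "frequently small" to the full limit
  rw [Metric.tendsto_atTop]
  intro ε₀ hε₀
  by_contra hcon
  push_neg at hcon
  have hfreq : ∀ N, ∃ i, N ≤ i ∧ ε₀ ≤ ‖A.g i‖ := by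
    intro N
    obtain ⟨i, hiN, hi⟩ := hcon N
    rw [Real.dist_0_eq_abs, abs_of_nonneg (norm_nonneg _)] at hi
    exact ⟨i, hiN, hi⟩
  obtain ⟨r, hr, hUCr⟩ := hUCL (ε₀ / 4) (by linarith)
  have hTpos : 0 < min (A.η * A.β₂ * (ε₀ / 2) ^ 2 / 2) (r * (A.η * A.β₂ * (ε₀ / 2))) :=
    lt_min (div_pos (mul_pos (mul_pos A.hη A.hβ₂) (pow_pos (by linarith) 2)) (by norm_num))
      (mul_pos hr (mul_pos (mul_pos A.hη A.hβ₂) (by linarith)))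
  set T := min (A.η * A.β₂ * (ε₀ / 2) ^ 2 / 2) (r * (A.η * A.β₂ * (ε₀ / 2))) with hT
  obtain ⟨M₂, hM₂⟩ : ∃ M₂, ∀ i, M₂ ≤ i → A.J (A.u i) - Jstar < T := by
    have h0 := hJto.eventually_lt_const (lt_add_of_pos_right Jstar hTpos)
    rw [eventually_atTop] at h0
    obtain ⟨M₂, hM₂⟩ := h0
    exact ⟨M₂, fun i hi => by linarith [hM₂ i hi]⟩
  obtain ⟨m, hmM₂, hmε⟩ := hfreq M₂
  have hex : ∃ l, m ≤ l ∧ ‖A.g l‖ < ε₀ / 2 := key (ε₀ / 2) (by linarith) m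
  have hlP := Nat.find_spec hex
  set l := Nat.find hex with hldef
  have hmid : ∀ j, m ≤ j → j < l → ε₀ / 2 ≤ ‖A.g j‖ := by
    intro j h1 h2
    by_contra h
    exact Nat.find_min hex h2 ⟨h1, lt_of_not_ge h⟩
  have hc'pos : 0 < 2 / (A.η * A.β₂ * ε₀) := div_pos (by norm_num) (mul_pos (mul_pos A.hη A.hβ₂) hε₀)
  set c' := 2 / (A.η * A.β₂ * ε₀) with hc'
  have hstep : ∀ j, m ≤ j → j < l →
      ‖A.u (j + 1) - A.u j‖ ≤ c' * (A.J (A.u j) - A.J (A.u (j + 1))) := by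
    intro j h1 h2
    by_cases hS : A.Succ j
    · have hd := hsucc_dec j hS
      rw [← mul_assoc] at hd
      have hgj : ε₀ / 2 ≤ ‖A.g j‖ := hmid j h1 h2
      have hdub : A.J (A.u j) - A.J (A.u (j + 1)) < T := by
        have h5 := hM₂ j (le_trans hmM₂ h1)
        linarith [hJstar_le (j + 1)]
      have hminmono : min ((ε₀ / 2) ^ 2) ((ε₀ / 2) * A.ΔG j) ≤
          min (‖A.g j‖ ^ 2) (‖A.g j‖ * A.ΔG j) :=
        le_min (le_trans (min_le_left _ _) (by nlinarith))
          (le_trans (min_le_right _ _) (by nlinarith [A.hΔG j]))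
      have hlow : A.η * A.β₂ * min ((ε₀ / 2) ^ 2) ((ε₀ / 2) * A.ΔG j) ≤
          A.J (A.u j) - A.J (A.u (j + 1)) := by
        calc A.η * A.β₂ * min ((ε₀ / 2) ^ 2) ((ε₀ / 2) * A.ΔG j)
            ≤ A.η * A.β₂ * min (‖A.g j‖ ^ 2) (‖A.g j‖ * A.ΔG j) :=
            mul_le_mul_of_nonneg_left hminmono (mul_pos A.hη A.hβ₂).le
          _ ≤ _ := hd
      have hTle : T ≤ A.η * A.β₂ * (ε₀ / 2) ^ 2 / 2 := min_le_left _ _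
      have hminlt : min ((ε₀ / 2) ^ 2) ((ε₀ / 2) * A.ΔG j) < (ε₀ / 2) ^ 2 := by
        by_contra hcon2
        push_neg at hcon2
        have h9 : A.η * A.β₂ * (ε₀ / 2) ^ 2 ≤
            A.η * A.β₂ * min ((ε₀ / 2) ^ 2) ((ε₀ / 2) * A.ΔG j) :=
          mul_le_mul_of_nonneg_left hcon2 (mul_pos A.hη A.hβ₂).le
        nlinarith
      have hmr : min ((ε₀ / 2) ^ 2) ((ε₀ / 2) * A.ΔG j) = (ε₀ / 2) * A.ΔG j := by
        rcases min_cases ((ε₀ / 2) ^ 2) ((ε₀ / 2) * A.ΔG j) with ⟨h, _⟩ | ⟨h, _⟩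
        · exfalso; rw [h] at hminlt; exact lt_irrefl _ hminlt
        · exact h
      rw [hmr] at hlow
      have hueq2 : A.u (j + 1) - A.u j = A.s j := by rw [hc1 j hS]; abel
      rw [hueq2]
      refine le_trans (hb1 j) ?_
      rw [hc', div_mul_eq_mul_div, le_div_iff₀ (mul_pos (mul_pos A.hη A.hβ₂) hε₀)]
      nlinarith
    · rw [hc2 j hS]
      simp
  have htel := gaspin_telescope A.u (fun i => A.J (A.u i)) c' m l hlP.1 hstep
  have hmove : ‖A.u l - A.u m‖ ≤ r := by
    have h1 : A.J (A.u m) - A.J (A.u l) ≤ A.J (A.u m) - Jstar := by linarith [hJstar_le l]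
    have h2 : A.J (A.u m) - Jstar < T := hM₂ m hmM₂
    have h3 : T ≤ r * (A.η * A.β₂ * (ε₀ / 2)) := min_le_right _ _
    have h4 : c' * (A.J (A.u m) - A.J (A.u l)) ≤ c' * (r * (A.η * A.β₂ * (ε₀ / 2))) := by
      apply mul_le_mul_of_nonneg_left _ hc'pos.le
      linarith
    have h5 : c' * (r * (A.η * A.β₂ * (ε₀ / 2))) = r := by
      rw [hc']
      have h0 : A.η * A.β₂ * ε₀ ≠ 0 := ne_of_gt (mul_pos (mul_pos A.hη A.hβ₂) hε₀)
      field_simp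
      have h6 := A.hη.ne'
      have h7 := A.hβ₂.ne'
      field_simp
    linarith
  have hml : dist (A.u l) (A.u m) ≤ r := by rw [dist_eq_norm]; exact hmove
  have hgd := hUCr (A.u l) (hL l) (A.u m) (hL m) hml
  have h8 : ‖A.g l - A.g m‖ ≤ ε₀ / 4 := by
    rw [dist_eq_norm] at hgd
    exact hgd
  have h9 := norm_sub_norm_le (A.g m) (A.g l)
  rw [norm_sub_rev] at h9
  linarith [hlP.2, hmε]
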